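/- Let G be a group, N ≤ K ≤ G subgroups with N normal in G. If S invariably generates K and T invariably generates G/N, and T₁ ⊆ G is any set of preimages of T under the quotient map G → G/N, then S ∪ T₁ invariably generates G. -/

import Mathlib

/-- `S` invariably generates `G`. -/
def InvGen (G : Type*) [Group G] (S : Set G) : Prop :=
  ∀ f : G → G, Subgroup.closure ((fun s => f s * s * (f s)⁻¹) '' S) = ⊤

theorem invGen_of_subgroup_and_quotient {G : Type*} [Group G]
    (N K : Subgroup G) [N.Normal] (hNK : N ≤ K)
    (S : Set K) (hS : InvGen K S)
    (T : Set (G ⧸ N)) (hT : InvGen (G ⧸ N) T)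
    (T₁ : Set G) (hT₁ : (QuotientGroup.mk : G → G ⧸ N) '' T₁ = T) :
    InvGen G ((Subtype.val '' S) ∪ T₁) := by
  classical
  intro f
  set P : Set G := (fun x => f x * x * (f x)⁻¹) '' ((Subtype.val '' S) ∪ T₁) with hP
  set H := Subgroup.closure P with hH
  have hlift : ∀ t ∈ T, ∃ g ∈ T₁, (QuotientGroup.mk g : G ⧸ N) = t := by
    intro t ht
    rw [← hT₁] at ht
    obtain ⟨g, hg, hgt⟩ := ht
    exact ⟨g, hg, hgt⟩
  let l : G ⧸ N → G := fun q => if h : q ∈ T then (hlift q h).choose else Quotient.out (s := QuotientGroup.leftRel N) q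
  have hl1 : ∀ t ∈ T, l t ∈ T₁ := fun t ht => by
    simp only [l, dif_pos ht]; exact (hlift t ht).choose_spec.1
  have hl2 : ∀ t ∈ T, (QuotientGroup.mk (l t) : G ⧸ N) = t := fun t ht => by
    simp only [l, dif_pos ht]; exact (hlift t ht).choose_spec.2
  have hmap : H.map (QuotientGroup.mk' N) = ⊤ := by
    rw [eq_top_iff, ← hT (fun q => QuotientGroup.mk (f (l q))), Subgroup.closure_le]
    rintro _ ⟨t, ht, rfl⟩
    refine ⟨f (l t) * l t * (f (l t))⁻¹,
      Subgroup.subset_closure ⟨l t, Or.inr (hl1 t ht), rfl⟩, ?_⟩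
    simp [QuotientGroup.mk'_apply, hl2 t ht]
  have hdec : ∀ g : G, ∃ h ∈ H, h⁻¹ * g ∈ N := by
    intro g
    have : (QuotientGroup.mk' N) g ∈ H.map (QuotientGroup.mk' N) := by
      rw [hmap]; trivial
    obtain ⟨h, hh, heq⟩ := this
    refine ⟨h, hh, ?_⟩
    rwa [QuotientGroup.mk'_apply, QuotientGroup.mk'_apply, QuotientGroup.eq] at heq
  have hKH : (K : Set G) ⊆ H := by
    set h0 : G → G := fun g => (hdec g).choose with hh0
    have h0H : ∀ g, h0 g ∈ H := fun g => (hdec g).choose_spec.1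
    have h0N : ∀ g, (h0 g)⁻¹ * g ∈ N := fun g => (hdec g).choose_spec.2
    set f' : K → K := fun k => ⟨(h0 (f k))⁻¹ * f k, hNK (h0N (f k))⟩ with hf'
    have hcl := hS f'
    intro g hg
    have hmem : (⟨g, hg⟩ : K) ∈ Subgroup.closure ((fun s => f' s * s * (f' s)⁻¹) '' S) := by
      rw [hcl]; trivial
    have key : ∀ k : K, k ∈ Subgroup.closure ((fun s => f' s * s * (f' s)⁻¹) '' S) →
        (k : G) ∈ H := by
      intro k hk
      induction hk using Subgroup.closure_induction with
      | mem x hx =>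
        obtain ⟨s, hs, rfl⟩ := hx
        have hPmem : f (s : G) * (s : G) * (f (s : G))⁻¹ ∈ H :=
          Subgroup.subset_closure ⟨(s : G), Or.inl ⟨s, hs, rfl⟩, rfl⟩
        have hval : ((f' s * s * (f' s)⁻¹ : K) : G)
            = (h0 (f (s : G)))⁻¹ * (f (s : G) * (s : G) * (f (s : G))⁻¹) * h0 (f (s : G)) := by
          simp only [hf', Subgroup.coe_mul, Subgroup.coe_inv]
          group
        rw [hval]
        exact H.mul_mem (H.mul_mem (H.inv_mem (h0H _)) hPmem) (h0H _)
      | one => exact H.one_mem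
      | mul x y hx hy ihx ihy => exact H.mul_mem ihx ihy
      | inv x hx ihx => exact H.inv_mem ihx
    exact key _ hmem
  rw [eq_top_iff]
  intro g _
  obtain ⟨h, hh, hn⟩ := hdec g
  have h2 : h⁻¹ * g ∈ H := hKH (hNK hn)
  have h3 := H.mul_mem hh h2
  simpa using h3
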